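/- Let y ∈ ℝ with 0 ≤ y ≤ 1, E > 0 and t ∈ ℝ, and let A be the 2×2 complex matrix A = E [[1 + y², y√(1 − y²)], [y√(1 − y²), 1 − y²]]. Then the matrix exponential satisfies exp(−itA) = e^{−iEt} [[cos(Eyt) − i y sin(Eyt), −i √(1 − y²) sin(Eyt)], [−i √(1 − y²) sin(Eyt), cos(Eyt) + i y sin(Eyt)]]. -/

import Mathlib

noncomputable section

attribute [local instance] Matrix.linftyOpNormedRing Matrix.linftyOpNormedAlgebra

/-- explicit formula for the exponential of the 2×2 Hamiltonian matrix
`A = E [[1 + y², y√(1−y²)], [y√(1−y²), 1 − y²]]`. -/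
theorem exp_of_two_by_two_hamiltonian
    (y E t : ℝ) (hy0 : 0 ≤ y) (hy1 : y ≤ 1) (hE : 0 < E)
    (A : Matrix (Fin 2) (Fin 2) ℂ)
    (hA : A = (E : ℂ) • !![1 + (y : ℂ) ^ 2, (y : ℂ) * (Real.sqrt (1 - y ^ 2) : ℂ);
                          (y : ℂ) * (Real.sqrt (1 - y ^ 2) : ℂ), 1 - (y : ℂ) ^ 2]) :
    NormedSpace.exp ((-(Complex.I * (t : ℂ))) • A) =
      Complex.exp (-(Complex.I * (E : ℂ) * (t : ℂ))) •
        !![(Real.cos (E * y * t) : ℂ) - Complex.I * (y : ℂ) * (Real.sin (E * y * t) : ℂ),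
             -Complex.I * (Real.sqrt (1 - y ^ 2) : ℂ) * (Real.sin (E * y * t) : ℂ);
           -Complex.I * (Real.sqrt (1 - y ^ 2) : ℂ) * (Real.sin (E * y * t) : ℂ),
             (Real.cos (E * y * t) : ℂ) + Complex.I * (y : ℂ) * (Real.sin (E * y * t) : ℂ)] := by
  set s : ℝ := Real.sqrt (1 - y ^ 2) with hs_def
  have hs2 : (s : ℂ) ^ 2 = 1 - (y : ℂ) ^ 2 := by
    have h1 : s ^ 2 = 1 - y ^ 2 := Real.sq_sqrt (by nlinarith)
    calc (s:ℂ)^2 = ((s^2 : ℝ) : ℂ) := by push_cast; ring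
    _ = 1 - (y:ℂ)^2 := by rw [h1]; push_cast; ring
  set U : Matrix (Fin 2) (Fin 2) ℂ :=
    !![1 + (y : ℂ), -(s : ℂ); (s : ℂ), 1 + (y : ℂ)] with hU_def
  have hdet : U.det = 2 * (1 + (y : ℂ)) := by
    simp [hU_def, Matrix.det_fin_two_of]
    linear_combination hs2
  have hy1C : (1 : ℂ) + (y : ℂ) ≠ 0 := by
    intro h
    have : ((1 + y : ℝ) : ℂ) = 0 := by push_cast; linear_combination h
    have := Complex.ofReal_eq_zero.mp this
    linarith
  have hdet_unit : IsUnit U.det := by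
    rw [hdet]
    exact isUnit_iff_ne_zero.2 (by simp [hy1C])
  haveI : Invertible U := U.invertibleOfIsUnitDet hdet_unit
  have hUunit : IsUnit U := (Matrix.isUnit_iff_isUnit_det U).2 hdet_unit
  set d : Fin 2 → ℂ := ![-(Complex.I * E * t) * (1 + y), -(Complex.I * E * t) * (1 - y)] with hd_def
  have key : (-(Complex.I * (t : ℂ))) • A = U * Matrix.diagonal d * U⁻¹ := by
    rw [eq_comm, Matrix.mul_inv_eq_iff_eq_mul_of_invertible]
    ext i j
    fin_cases i <;> fin_cases j <;>
      simp [hA, hU_def, hd_def, Matrix.mul_apply, Fin.sum_univ_two, Matrix.diagonal] <;>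
      first
        | linear_combination (Complex.I * (E:ℂ) * (t:ℂ) * (y:ℂ)) * hs2
        | linear_combination (-(Complex.I * (E:ℂ) * (t:ℂ) * (y:ℂ))) * hs2
        | linear_combination (0 : ℂ) * hs2
  -- exponentials of the diagonal entries
  have hexp : ∀ r : ℝ, Complex.exp (-(Complex.I * (r : ℂ))) =
      (Real.cos r : ℂ) - Complex.I * (Real.sin r : ℂ) := by
    intro r
    rw [show -(Complex.I * (r : ℂ)) = ((-r : ℝ) : ℂ) * Complex.I by push_cast; ring,
      Complex.exp_mul_I, ← Complex.ofReal_cos, ← Complex.ofReal_sin]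
    push_cast [Real.cos_neg, Real.sin_neg]
    ring
  have hd0 : Complex.exp (d 0) = Complex.exp (-(Complex.I * E * t)) *
      ((Real.cos (E*y*t) : ℂ) - Complex.I * (Real.sin (E*y*t) : ℂ)) := by
    have : d 0 = -(Complex.I * E * t) + -(Complex.I * ((E*y*t : ℝ) : ℂ)) := by
      simp [hd_def]; push_cast; ring
    rw [this, Complex.exp_add, hexp]
  have hd1 : Complex.exp (d 1) = Complex.exp (-(Complex.I * E * t)) *
      ((Real.cos (E*y*t) : ℂ) + Complex.I * (Real.sin (E*y*t) : ℂ)) := by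
    have h : d 1 = -(Complex.I * E * t) + ((E*y*t : ℝ) : ℂ) * Complex.I := by
      simp [hd_def]; push_cast; ring
    rw [h, Complex.exp_add, Complex.exp_mul_I, ← Complex.ofReal_cos, ← Complex.ofReal_sin]
    ring
  rw [key, Matrix.exp_conj U (Matrix.diagonal d) hUunit, Matrix.exp_diagonal,
    Matrix.mul_inv_eq_iff_eq_mul_of_invertible]
  ext i j
  fin_cases i <;> fin_cases j <;>
    simp [hU_def, Matrix.mul_apply, Fin.sum_univ_two, Matrix.diagonal,
      Pi.coe_exp, ← Complex.exp_eq_exp_ℂ, hd0, hd1] <;>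
    first
      | linear_combination (Complex.exp (-(Complex.I * (E:ℂ) * (t:ℂ))) * Complex.I * Complex.sin ((E:ℂ)*(y:ℂ)*(t:ℂ))) * hs2
      | linear_combination (-(Complex.exp (-(Complex.I * (E:ℂ) * (t:ℂ))) * Complex.I * Complex.sin ((E:ℂ)*(y:ℂ)*(t:ℂ)))) * hs2
      | linear_combination (0:ℂ) * hs2
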